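/- For all real x with 0 < x < π/2, 3 + (3/20 + (1/280)x^2 + (23/33600)·x^4)·x^3·tan x < 2·(sin x/x) + (tan x)/x < 3 + (3/20 + (1/280)x^2 + μ·x^4)·x^3·tan x, where μ = (17920 − 168π^4 − π^6)/(70π^8). -/

import Mathlib

open Real

lemma ind_step {f g f' g' : ℝ → ℝ} (hf : ∀ x, HasDerivAt f (f' x) x)
    (hg : ∀ x, HasDerivAt g (g' x) x) (h0 : f 0 ≤ g 0)
    (hle : ∀ x, 0 ≤ x → f' x ≤ g' x) {x : ℝ} (hx : 0 ≤ x) : f x ≤ g x := by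
  have hmono : MonotoneOn (fun y => g y - f y) (Set.Ici 0) := by
    apply monotoneOn_of_deriv_nonneg (convex_Ici 0)
    · exact fun y _ => ((hg y).sub (hf y)).differentiableAt.continuousAt.continuousWithinAt
    · exact fun y _ => ((hg y).sub (hf y)).differentiableAt.differentiableWithinAt
    · intro y hy
      rw [interior_Ici] at hy
      rw [show deriv (fun y => g y - f y) y = g' y - f' y from ((hg y).sub (hf y)).deriv]
      linarith [hle y hy.le]
  have := hmono (Set.mem_Ici.2 le_rfl) (Set.mem_Ici.2 hx) hx
  simp only at this
  linarith
lemma s3L {x : ℝ} (hx : 0 ≤ x) : x - x^3/6 ≤ Real.sin x := by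
  apply ind_step (f' := fun y => 1 - y^2/2) (g' := fun y => Real.cos y) ?_ (fun y => Real.hasDerivAt_sin y) (by norm_num) (fun y hy => Real.one_sub_sq_div_two_le_cos) hx
  intro y
  have h := (hasDerivAt_id y).sub ((hasDerivAt_pow 3 y).div_const 6)
  refine h.congr_deriv ?_
  norm_num
  ring

lemma c4U {x : ℝ} (hx : 0 ≤ x) : Real.cos x ≤ 1 - x^2/2 + x^4/24 := by
  apply ind_step (f' := fun y => -Real.sin y) (g' := fun y => -y + y^3/6) (fun y => Real.hasDerivAt_cos y) ?_ (by norm_num) (fun y hy => by have := s3L hy; linarith) hx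
  intro y
  have h := (((hasDerivAt_const y (1:ℝ)).sub ((hasDerivAt_pow 2 y).div_const 2)).add ((hasDerivAt_pow 4 y).div_const 24))
  refine h.congr_deriv ?_
  norm_num
  ring

lemma s5U {x : ℝ} (hx : 0 ≤ x) : Real.sin x ≤ x - x^3/6 + x^5/120 := by
  apply ind_step (f' := fun y => Real.cos y) (g' := fun y => 1 - y^2/2 + y^4/24) (fun y => Real.hasDerivAt_sin y) ?_ (by norm_num) (fun y hy => c4U hy) hx
  intro y
  have h := (((hasDerivAt_id y).sub ((hasDerivAt_pow 3 y).div_const 6)).add ((hasDerivAt_pow 5 y).div_const 120))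
  refine h.congr_deriv ?_
  norm_num
  ring

lemma c6L {x : ℝ} (hx : 0 ≤ x) : 1 - x^2/2 + x^4/24 - x^6/720 ≤ Real.cos x := by
  apply ind_step (f' := fun y => -y + y^3/6 - y^5/120) (g' := fun y => -Real.sin y) ?_ (fun y => Real.hasDerivAt_cos y) (by norm_num) (fun y hy => by have := s5U hy; linarith) hx
  intro y
  have h := ((((hasDerivAt_const y (1:ℝ)).sub ((hasDerivAt_pow 2 y).div_const 2)).add ((hasDerivAt_pow 4 y).div_const 24)).sub ((hasDerivAt_pow 6 y).div_const 720))
  refine h.congr_deriv ?_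
  norm_num
  ring

lemma s7L {x : ℝ} (hx : 0 ≤ x) : x - x^3/6 + x^5/120 - x^7/5040 ≤ Real.sin x := by
  apply ind_step (f' := fun y => 1 - y^2/2 + y^4/24 - y^6/720) (g' := fun y => Real.cos y) ?_ (fun y => Real.hasDerivAt_sin y) (by norm_num) (fun y hy => c6L hy) hx
  intro y
  have h := ((((hasDerivAt_id y).sub ((hasDerivAt_pow 3 y).div_const 6)).add ((hasDerivAt_pow 5 y).div_const 120)).sub ((hasDerivAt_pow 7 y).div_const 5040))
  refine h.congr_deriv ?_
  norm_num
  ring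

lemma c8U {x : ℝ} (hx : 0 ≤ x) : Real.cos x ≤ 1 - x^2/2 + x^4/24 - x^6/720 + x^8/40320 := by
  apply ind_step (f' := fun y => -Real.sin y) (g' := fun y => -y + y^3/6 - y^5/120 + y^7/5040) (fun y => Real.hasDerivAt_cos y) ?_ (by norm_num) (fun y hy => by have := s7L hy; linarith) hx
  intro y
  have h := (((((hasDerivAt_const y (1:ℝ)).sub ((hasDerivAt_pow 2 y).div_const 2)).add ((hasDerivAt_pow 4 y).div_const 24)).sub ((hasDerivAt_pow 6 y).div_const 720)).add ((hasDerivAt_pow 8 y).div_const 40320))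
  refine h.congr_deriv ?_
  norm_num
  ring

lemma s9U {x : ℝ} (hx : 0 ≤ x) : Real.sin x ≤ x - x^3/6 + x^5/120 - x^7/5040 + x^9/362880 := by
  apply ind_step (f' := fun y => Real.cos y) (g' := fun y => 1 - y^2/2 + y^4/24 - y^6/720 + y^8/40320) (fun y => Real.hasDerivAt_sin y) ?_ (by norm_num) (fun y hy => c8U hy) hx
  intro y
  have h := (((((hasDerivAt_id y).sub ((hasDerivAt_pow 3 y).div_const 6)).add ((hasDerivAt_pow 5 y).div_const 120)).sub ((hasDerivAt_pow 7 y).div_const 5040)).add ((hasDerivAt_pow 9 y).div_const 362880))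
  refine h.congr_deriv ?_
  norm_num
  ring

lemma c10L {x : ℝ} (hx : 0 ≤ x) : 1 - x^2/2 + x^4/24 - x^6/720 + x^8/40320 - x^10/3628800 ≤ Real.cos x := by
  apply ind_step (f' := fun y => -y + y^3/6 - y^5/120 + y^7/5040 - y^9/362880) (g' := fun y => -Real.sin y) ?_ (fun y => Real.hasDerivAt_cos y) (by norm_num) (fun y hy => by have := s9U hy; linarith) hx
  intro y
  have h := ((((((hasDerivAt_const y (1:ℝ)).sub ((hasDerivAt_pow 2 y).div_const 2)).add ((hasDerivAt_pow 4 y).div_const 24)).sub ((hasDerivAt_pow 6 y).div_const 720)).add ((hasDerivAt_pow 8 y).div_const 40320)).sub ((hasDerivAt_pow 10 y).div_const 3628800))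
  refine h.congr_deriv ?_
  norm_num
  ring

lemma s11L {x : ℝ} (hx : 0 ≤ x) : x - x^3/6 + x^5/120 - x^7/5040 + x^9/362880 - x^11/39916800 ≤ Real.sin x := by
  apply ind_step (f' := fun y => 1 - y^2/2 + y^4/24 - y^6/720 + y^8/40320 - y^10/3628800) (g' := fun y => Real.cos y) ?_ (fun y => Real.hasDerivAt_sin y) (by norm_num) (fun y hy => c10L hy) hx
  intro y
  have h := ((((((hasDerivAt_id y).sub ((hasDerivAt_pow 3 y).div_const 6)).add ((hasDerivAt_pow 5 y).div_const 120)).sub ((hasDerivAt_pow 7 y).div_const 5040)).add ((hasDerivAt_pow 9 y).div_const 362880)).sub ((hasDerivAt_pow 11 y).div_const 39916800))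
  refine h.congr_deriv ?_
  norm_num
  ring

lemma c12U {x : ℝ} (hx : 0 ≤ x) : Real.cos x ≤ 1 - x^2/2 + x^4/24 - x^6/720 + x^8/40320 - x^10/3628800 + x^12/479001600 := by
  apply ind_step (f' := fun y => -Real.sin y) (g' := fun y => -y + y^3/6 - y^5/120 + y^7/5040 - y^9/362880 + y^11/39916800) (fun y => Real.hasDerivAt_cos y) ?_ (by norm_num) (fun y hy => by have := s11L hy; linarith) hx
  intro y
  have h := (((((((hasDerivAt_const y (1:ℝ)).sub ((hasDerivAt_pow 2 y).div_const 2)).add ((hasDerivAt_pow 4 y).div_const 24)).sub ((hasDerivAt_pow 6 y).div_const 720)).add ((hasDerivAt_pow 8 y).div_const 40320)).sub ((hasDerivAt_pow 10 y).div_const 3628800)).add ((hasDerivAt_pow 12 y).div_const 479001600))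
  refine h.congr_deriv ?_
  norm_num
  ring

lemma s13U {x : ℝ} (hx : 0 ≤ x) : Real.sin x ≤ x - x^3/6 + x^5/120 - x^7/5040 + x^9/362880 - x^11/39916800 + x^13/6227020800 := by
  apply ind_step (f' := fun y => Real.cos y) (g' := fun y => 1 - y^2/2 + y^4/24 - y^6/720 + y^8/40320 - y^10/3628800 + y^12/479001600) (fun y => Real.hasDerivAt_sin y) ?_ (by norm_num) (fun y hy => c12U hy) hx
  intro y
  have h := (((((((hasDerivAt_id y).sub ((hasDerivAt_pow 3 y).div_const 6)).add ((hasDerivAt_pow 5 y).div_const 120)).sub ((hasDerivAt_pow 7 y).div_const 5040)).add ((hasDerivAt_pow 9 y).div_const 362880)).sub ((hasDerivAt_pow 11 y).div_const 39916800)).add ((hasDerivAt_pow 13 y).div_const 6227020800))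
  refine h.congr_deriv ?_
  norm_num
  ring

lemma c14L {x : ℝ} (hx : 0 ≤ x) : 1 - x^2/2 + x^4/24 - x^6/720 + x^8/40320 - x^10/3628800 + x^12/479001600 - x^14/87178291200 ≤ Real.cos x := by
  apply ind_step (f' := fun y => -y + y^3/6 - y^5/120 + y^7/5040 - y^9/362880 + y^11/39916800 - y^13/6227020800) (g' := fun y => -Real.sin y) ?_ (fun y => Real.hasDerivAt_cos y) (by norm_num) (fun y hy => by have := s13U hy; linarith) hx
  intro y
  have h := ((((((((hasDerivAt_const y (1:ℝ)).sub ((hasDerivAt_pow 2 y).div_const 2)).add ((hasDerivAt_pow 4 y).div_const 24)).sub ((hasDerivAt_pow 6 y).div_const 720)).add ((hasDerivAt_pow 8 y).div_const 40320)).sub ((hasDerivAt_pow 10 y).div_const 3628800)).add ((hasDerivAt_pow 12 y).div_const 479001600)).sub ((hasDerivAt_pow 14 y).div_const 87178291200))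
  refine h.congr_deriv ?_
  norm_num
  ring

lemma s15L {x : ℝ} (hx : 0 ≤ x) : x - x^3/6 + x^5/120 - x^7/5040 + x^9/362880 - x^11/39916800 + x^13/6227020800 - x^15/1307674368000 ≤ Real.sin x := by
  apply ind_step (f' := fun y => 1 - y^2/2 + y^4/24 - y^6/720 + y^8/40320 - y^10/3628800 + y^12/479001600 - y^14/87178291200) (g' := fun y => Real.cos y) ?_ (fun y => Real.hasDerivAt_sin y) (by norm_num) (fun y hy => c14L hy) hx
  intro y
  have h := ((((((((hasDerivAt_id y).sub ((hasDerivAt_pow 3 y).div_const 6)).add ((hasDerivAt_pow 5 y).div_const 120)).sub ((hasDerivAt_pow 7 y).div_const 5040)).add ((hasDerivAt_pow 9 y).div_const 362880)).sub ((hasDerivAt_pow 11 y).div_const 39916800)).add ((hasDerivAt_pow 13 y).div_const 6227020800)).sub ((hasDerivAt_pow 15 y).div_const 1307674368000))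
  refine h.congr_deriv ?_
  norm_num
  ring

lemma c16U {x : ℝ} (hx : 0 ≤ x) : Real.cos x ≤ 1 - x^2/2 + x^4/24 - x^6/720 + x^8/40320 - x^10/3628800 + x^12/479001600 - x^14/87178291200 + x^16/20922789888000 := by
  apply ind_step (f' := fun y => -Real.sin y) (g' := fun y => -y + y^3/6 - y^5/120 + y^7/5040 - y^9/362880 + y^11/39916800 - y^13/6227020800 + y^15/1307674368000) (fun y => Real.hasDerivAt_cos y) ?_ (by norm_num) (fun y hy => by have := s15L hy; linarith) hx
  intro y
  have h := (((((((((hasDerivAt_const y (1:ℝ)).sub ((hasDerivAt_pow 2 y).div_const 2)).add ((hasDerivAt_pow 4 y).div_const 24)).sub ((hasDerivAt_pow 6 y).div_const 720)).add ((hasDerivAt_pow 8 y).div_const 40320)).sub ((hasDerivAt_pow 10 y).div_const 3628800)).add ((hasDerivAt_pow 12 y).div_const 479001600)).sub ((hasDerivAt_pow 14 y).div_const 87178291200)).add ((hasDerivAt_pow 16 y).div_const 20922789888000))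
  refine h.congr_deriv ?_
  norm_num
  ring

lemma s17U {x : ℝ} (hx : 0 ≤ x) : Real.sin x ≤ x - x^3/6 + x^5/120 - x^7/5040 + x^9/362880 - x^11/39916800 + x^13/6227020800 - x^15/1307674368000 + x^17/355687428096000 := by
  apply ind_step (f' := fun y => Real.cos y) (g' := fun y => 1 - y^2/2 + y^4/24 - y^6/720 + y^8/40320 - y^10/3628800 + y^12/479001600 - y^14/87178291200 + y^16/20922789888000) (fun y => Real.hasDerivAt_sin y) ?_ (by norm_num) (fun y hy => c16U hy) hx
  intro y
  have h := (((((((((hasDerivAt_id y).sub ((hasDerivAt_pow 3 y).div_const 6)).add ((hasDerivAt_pow 5 y).div_const 120)).sub ((hasDerivAt_pow 7 y).div_const 5040)).add ((hasDerivAt_pow 9 y).div_const 362880)).sub ((hasDerivAt_pow 11 y).div_const 39916800)).add ((hasDerivAt_pow 13 y).div_const 6227020800)).sub ((hasDerivAt_pow 15 y).div_const 1307674368000)).add ((hasDerivAt_pow 17 y).div_const 355687428096000))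
  refine h.congr_deriv ?_
  norm_num
  ring
-- Polynomial positivity lemmas

lemma qApos {t : ℝ} (h0 : 0 ≤ t) (hT : t ≤ 24675/10000) :
    0 < 47/739200 - 49639/12108096000*t + 15209/145297152000*t^2 - 127/69742632960*t^3
      + 289/17435658240000*t^4 - 23/209227898880000*t^5 := by
  nlinarith [pow_le_pow_left₀ h0 hT 3, pow_le_pow_left₀ h0 hT 5, sq_nonneg t, pow_nonneg h0 4, hT, h0]

lemma qBpos {t : ℝ} (h0 : 0 ≤ t) (hT : t ≤ 20449/10000) :
    0 < 4399/21000000 - 9751/99000000*t + 11058643/1891890000000*t^2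
      - 119548453/817296480000000*t^3 + 14100629/6947020080000000*t^4
      - 119531/5448643200000000*t^5 + 64459/457686028800000000*t^6
      - 149/217945728000000000*t^7 := by
  have hr : 0 < (173841145453134548527647226290305475887/1995041664000000000000000000000000000000000 : ℝ)
      + (-14405837560626479003402907634897981/2593554163200000000000000000000000000000)*t
      + (36883708504744535018685136931/259355416320000000000000000000000000)*t^2
      + (-154481966930724971585143/77806624896000000000000000000000)*t^3
      + (9910100218549529/457686028800000000000000000)*t^4
      + (-6381915079/45768602880000000000000)*t^5
      + (149/217945728000000000)*t^6 := by
    nlinarith [pow_le_pow_left₀ h0 hT 3, pow_le_pow_left₀ h0 hT 5, sq_nonneg t,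
      pow_nonneg h0 4, pow_nonneg h0 6, hT, h0]
  nlinarith [mul_nonneg (sub_nonneg.2 hT) hr.le]

lemma PCneg {x : ℝ} (ha : 143/100 ≤ x) (hb : x ≤ 15707965/10000000) :
    663/350000*x^8 - 1922/1771875*x^10 + 9966421/130977000000*x^12
      - 2915281/1362160800000*x^14 + 3043/72576000000*x^16 < 0 := by
  have h0 : (0:ℝ) ≤ x - 143/100 := by linarith
  have hw : x - 143/100 ≤ 1407965/10000000 := by linarith
  nlinarith [pow_le_pow_left₀ h0 hw 8, pow_le_pow_left₀ h0 hw 9, pow_le_pow_left₀ h0 hw 10,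
    pow_le_pow_left₀ h0 hw 11, pow_le_pow_left₀ h0 hw 13, pow_le_pow_left₀ h0 hw 14,
    pow_le_pow_left₀ h0 hw 15, pow_le_pow_left₀ h0 hw 16,
    pow_nonneg h0 2, pow_nonneg h0 3, pow_nonneg h0 4, pow_nonneg h0 5,
    pow_nonneg h0 6, pow_nonneg h0 7, pow_nonneg h0 12, h0, hw]

-- Bounds on the constant μ

lemma pi_sq_bounds : (9.8696002:ℝ) < π^2 ∧ π^2 < 9.8696066 := by
  have h1 := Real.pi_gt_d6
  have h2 := Real.pi_lt_d6
  constructor <;> nlinarith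

lemma muLo : 894/1000000 ≤ (17920 - 168*π^4 - π^6)/(70*π^8) := by
  have hp : (0:ℝ) < 70*π^8 := by positivity
  rw [le_div_iff₀ hp]
  obtain ⟨h2l, h2u⟩ := pi_sq_bounds
  have hsq : (0:ℝ) ≤ π^2 := sq_nonneg π
  have h4n : (0:ℝ) ≤ π^4 := by positivity
  have h4u : π^4 < 97.4091345 := by nlinarith [mul_self_lt_mul_self hsq h2u]
  have h6u : π^6 < 961.38984 := by nlinarith [mul_lt_mul'' h2u h4u hsq h4n]
  have h8u : π^8 < 9488.5396 := by nlinarith [mul_self_lt_mul_self h4n h4u]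
  nlinarith [h4u, h6u, h8u]

lemma muHi : (17920 - 168*π^4 - π^6)/(70*π^8) ≤ 895/1000000 := by
  have hp : (0:ℝ) < 70*π^8 := by positivity
  rw [div_le_iff₀ hp]
  obtain ⟨h2l, h2u⟩ := pi_sq_bounds
  have h4l : (97.409:ℝ) < π^4 := by
    nlinarith [mul_self_lt_mul_self (by norm_num : (0:ℝ) ≤ 9.8696002) h2l]
  have h6l : (961.386:ℝ) < π^6 := by
    nlinarith [mul_lt_mul'' h2l h4l (by norm_num : (0:ℝ) ≤ (9.8696002:ℝ)) (by norm_num : (0:ℝ) ≤ (97.409:ℝ))]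
  have h8l : (9488.51:ℝ) < π^8 := by
    nlinarith [mul_self_lt_mul_self (by norm_num : (0:ℝ) ≤ (97.409:ℝ)) h4l]
  nlinarith [h4l, h6l, h8l]

-- Lower bound: the main trigonometric inequality

lemma lowerM {x : ℝ} (h1 : 0 < x) (h2 : x < π/2) :
    0 < Real.sin (2*x) + Real.sin x - 3*(x*Real.cos x)
      - (3/20 + x^2/280 + 23/33600*x^4)*(x^4*Real.sin x) := by
  have hx := h1.le
  have hpi := Real.pi_lt_d6
  have hxb : x ≤ 15707965/10000000 := by linarith
  have hT : x^2 ≤ 24675/10000 := by nlinarith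
  have hq := qApos (sq_nonneg x) hT
  have hs2 := s15L (by linarith : (0:ℝ) ≤ 2*x)
  have hs1 := s15L hx
  have hcU := c12U hx
  have hsU := s13U hx
  have hxc : x*Real.cos x ≤ x*(1 - x^2/2 + x^4/24 - x^6/720 + x^8/40320 - x^10/3628800 + x^12/479001600) :=
    mul_le_mul_of_nonneg_left hcU hx
  have h4 : (0:ℝ) ≤ x^4 := by positivity
  have hA : x^4*Real.sin x ≤ x^4*(x - x^3/6 + x^5/120 - x^7/5040 + x^9/362880 - x^11/39916800 + x^13/6227020800) :=
    mul_le_mul_of_nonneg_left hsU h4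
  have hco : (0:ℝ) ≤ 3/20 + x^2/280 + 23/33600*x^4 := by positivity
  have hB := mul_le_mul_of_nonneg_left hA hco
  nlinarith [mul_pos (pow_pos h1 11) hq, hs2, hs1, hxc, hB]

-- Upper bound, region (0, 1.43]

lemma upperB1 {x : ℝ} (h1 : 0 < x) (hb : x ≤ 143/100) :
    0 < (17920 - 168*π^4 - π^6)/(70*π^8)*(x^8*Real.sin x)
      - (Real.sin (2*x) + Real.sin x - 3*(x*Real.cos x) - (3/20 + x^2/280)*(x^4*Real.sin x)) := by
  have hx := h1.le
  have hpi := Real.pi_gt_d6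
  have hsin : 0 ≤ Real.sin x := Real.sin_nonneg_of_nonneg_of_le_pi hx (by linarith)
  have h8 : (0:ℝ) ≤ x^8 := by positivity
  have hstep1 : 894/1000000*(x^8*Real.sin x) ≤ (17920 - 168*π^4 - π^6)/(70*π^8)*(x^8*Real.sin x) :=
    mul_le_mul_of_nonneg_right muLo (mul_nonneg h8 hsin)
  have hsL := s15L hx
  have hstep2 : x^8*(x - x^3/6 + x^5/120 - x^7/5040 + x^9/362880 - x^11/39916800 + x^13/6227020800 - x^15/1307674368000) ≤ x^8*Real.sin x :=
    mul_le_mul_of_nonneg_left hsL h8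
  have hs2U := s17U (by linarith : (0:ℝ) ≤ 2*x)
  have hs1U := s13U hx
  have hcL := c14L hx
  have hxc : x*(1 - x^2/2 + x^4/24 - x^6/720 + x^8/40320 - x^10/3628800 + x^12/479001600 - x^14/87178291200) ≤ x*Real.cos x :=
    mul_le_mul_of_nonneg_left hcL hx
  have h4 : (0:ℝ) ≤ x^4 := by positivity
  have hco : (0:ℝ) ≤ 3/20 + x^2/280 := by positivity
  have hB := mul_le_mul_of_nonneg_left (mul_le_mul_of_nonneg_left hsL h4) hco
  have hT : x^2 ≤ 20449/10000 := by nlinarith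
  have hq := qBpos (sq_nonneg x) hT
  nlinarith [mul_pos (pow_pos h1 9) hq, hstep1, hstep2, hs2U, hs1U, hxc, hB]

-- Derivative of the comparison function

lemma EHasDeriv (A : ℝ) (x : ℝ) :
    HasDerivAt (fun y : ℝ => A*(y^8*Real.sin y) - (Real.sin (2*y) + Real.sin y - 3*(y*Real.cos y)
        - (3/20 + y^2/280)*(y^4*Real.sin y)))
      (A*(8*x^7*Real.sin x + x^8*Real.cos x) - (2*Real.cos (2*x) + Real.cos x
        - 3*(Real.cos x - x*Real.sin x)
        - ((x/140)*(x^4*Real.sin x) + (3/20 + x^2/280)*(4*x^3*Real.sin x + x^4*Real.cos x)))) x := by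
  have h1 : HasDerivAt (fun y : ℝ => y^8*Real.sin y) (8*x^7*Real.sin x + x^8*Real.cos x) x := by
    have h := (hasDerivAt_pow 8 x).mul (Real.hasDerivAt_sin x)
    refine h.congr_deriv ?_
    try norm_num
    try ring
  have h2 : HasDerivAt (fun y : ℝ => Real.sin (2*y)) (2*Real.cos (2*x)) x := by
    have hi : HasDerivAt (fun y : ℝ => 2*y) 2 x := by
      simpa using (hasDerivAt_id x).const_mul (2:ℝ)
    have h := (Real.hasDerivAt_sin (2*x)).comp x hi
    refine h.congr_deriv ?_
    try ring
  have h3 : HasDerivAt (fun y : ℝ => y*Real.cos y) (Real.cos x - x*Real.sin x) x := by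
    have h := (hasDerivAt_id x).mul (Real.hasDerivAt_cos x)
    refine h.congr_deriv ?_
    try simp
    try ring
  have h4 : HasDerivAt (fun y : ℝ => (3/20 + y^2/280)*(y^4*Real.sin y))
      ((x/140)*(x^4*Real.sin x) + (3/20 + x^2/280)*(4*x^3*Real.sin x + x^4*Real.cos x)) x := by
    have ha : HasDerivAt (fun y : ℝ => 3/20 + y^2/280) (x/140) x := by
      have h := (hasDerivAt_const x ((3:ℝ)/20)).add ((hasDerivAt_pow 2 x).div_const 280)
      refine h.congr_deriv ?_
      try norm_num
      try ring
    have hb : HasDerivAt (fun y : ℝ => y^4*Real.sin y) (4*x^3*Real.sin x + x^4*Real.cos x) x := by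
      have h := (hasDerivAt_pow 4 x).mul (Real.hasDerivAt_sin x)
      refine h.congr_deriv ?_
      try norm_num
      try ring
    exact ha.mul hb
  have h := (h1.const_mul A).sub (((h2.add (Real.hasDerivAt_sin x)).sub (h3.const_mul 3)).sub h4)
  refine h.congr_deriv ?_
  try ring

lemma EderivNeg {x : ℝ} (ha : 143/100 ≤ x) (hb : x ≤ π/2) :
    (17920 - 168*π^4 - π^6)/(70*π^8)*(8*x^7*Real.sin x + x^8*Real.cos x)
      - (2*Real.cos (2*x) + Real.cos x - 3*(Real.cos x - x*Real.sin x)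
        - ((x/140)*(x^4*Real.sin x) + (3/20 + x^2/280)*(4*x^3*Real.sin x + x^4*Real.cos x))) < 0 := by
  have hpi1 := Real.pi_gt_d6
  have hpi2 := Real.pi_lt_d6
  have hx : (0:ℝ) ≤ x := by linarith
  have hxb : x ≤ 15707965/10000000 := by linarith
  have hsin : 0 ≤ Real.sin x := Real.sin_nonneg_of_nonneg_of_le_pi hx (by linarith)
  have hcos : 0 ≤ Real.cos x := Real.cos_nonneg_of_mem_Icc ⟨by linarith, hb⟩
  have hpos : 0 ≤ 8*x^7*Real.sin x + x^8*Real.cos x :=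
    add_nonneg (mul_nonneg (by positivity) hsin) (mul_nonneg (by positivity) hcos)
  have h1 : (17920 - 168*π^4 - π^6)/(70*π^8)*(8*x^7*Real.sin x + x^8*Real.cos x)
      ≤ 895/1000000*(8*x^7*Real.sin x + x^8*Real.cos x) :=
    mul_le_mul_of_nonneg_right muHi hpos
  have hsU := s9U hx
  have hsL := s11L hx
  have hcU := c8U hx
  have hc2 := c14L (by linarith : (0:ℝ) ≤ 2*x)
  have p1 : x^7*Real.sin x ≤ x^7*(x - x^3/6 + x^5/120 - x^7/5040 + x^9/362880) :=
    mul_le_mul_of_nonneg_left hsU (by positivity)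
  have p2 : x^8*Real.cos x ≤ x^8*(1 - x^2/2 + x^4/24 - x^6/720 + x^8/40320) :=
    mul_le_mul_of_nonneg_left hcU (by positivity)
  have p3 : x*(x - x^3/6 + x^5/120 - x^7/5040 + x^9/362880 - x^11/39916800) ≤ x*Real.sin x :=
    mul_le_mul_of_nonneg_left hsL hx
  have p4 : x^3*Real.sin x ≤ x^3*(x - x^3/6 + x^5/120 - x^7/5040 + x^9/362880) :=
    mul_le_mul_of_nonneg_left hsU (by positivity)
  have p5 : x^4*Real.cos x ≤ x^4*(1 - x^2/2 + x^4/24 - x^6/720 + x^8/40320) :=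
    mul_le_mul_of_nonneg_left hcU (by positivity)
  have p6 : x^5*Real.sin x ≤ x^5*(x - x^3/6 + x^5/120 - x^7/5040 + x^9/362880) :=
    mul_le_mul_of_nonneg_left hsU (by positivity)
  have p7 : x^6*Real.cos x ≤ x^6*(1 - x^2/2 + x^4/24 - x^6/720 + x^8/40320) :=
    mul_le_mul_of_nonneg_left hcU (by positivity)
  have key := PCneg ha hxb
  nlinarith [h1, p1, p2, p3, p4, p5, p6, p7, hc2, hcU, key]

lemma EatPi2 :
    (17920 - 168*π^4 - π^6)/(70*π^8)*((π/2)^8*Real.sin (π/2))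
      - (Real.sin (2*(π/2)) + Real.sin (π/2) - 3*((π/2)*Real.cos (π/2))
        - (3/20 + (π/2)^2/280)*((π/2)^4*Real.sin (π/2))) = 0 := by
  have h2 : (2:ℝ)*(π/2) = π := by ring
  rw [h2, Real.sin_pi, Real.sin_pi_div_two, Real.cos_pi_div_two]
  have hπ : (π:ℝ) ≠ 0 := Real.pi_ne_zero
  field_simp
  ring

lemma upperB2 {x : ℝ} (ha : 143/100 ≤ x) (h2 : x < π/2) :
    0 < (17920 - 168*π^4 - π^6)/(70*π^8)*(x^8*Real.sin x)
      - (Real.sin (2*x) + Real.sin x - 3*(x*Real.cos x) - (3/20 + x^2/280)*(x^4*Real.sin x)) := by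
  have hpi := Real.pi_gt_d6
  set A : ℝ := (17920 - 168*π^4 - π^6)/(70*π^8) with hA
  have hanti : StrictAntiOn (fun y : ℝ => A*(y^8*Real.sin y) - (Real.sin (2*y) + Real.sin y
      - 3*(y*Real.cos y) - (3/20 + y^2/280)*(y^4*Real.sin y))) (Set.Icc (143/100) (π/2)) := by
    apply strictAntiOn_of_deriv_neg (convex_Icc _ _)
    · exact fun y _ => (EHasDeriv A y).differentiableAt.continuousAt.continuousWithinAt
    · intro y hy
      rw [interior_Icc] at hy
      rw [(EHasDeriv A y).deriv]
      exact EderivNeg hy.1.le hy.2.le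
  have hlt := hanti ⟨ha, h2.le⟩ ⟨by linarith, le_rfl⟩ h2
  simp only at hlt
  have h0 := EatPi2
  rw [← hA] at h0
  linarith

theorem stmt_18 (x : ℝ) (h1 : 0 < x) (h2 : x < π / 2) :
    3 + (3 / 20 + (1 / 280) * x ^ 2 + (23 / 33600) * x ^ 4) * x ^ 3 * tan x <
      2 * (sin x / x) + tan x / x ∧
    2 * (sin x / x) + tan x / x <
      3 + (3 / 20 + (1 / 280) * x ^ 2 +
        ((17920 - 168 * π ^ 4 - π ^ 6) / (70 * π ^ 8)) * x ^ 4) * x ^ 3 * tan x := by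
  have hpi := Real.pi_gt_d6
  have hπ : (π:ℝ) ≠ 0 := Real.pi_ne_zero
  have hx0 : x ≠ 0 := ne_of_gt h1
  have hcos : 0 < Real.cos x := Real.cos_pos_of_mem_Ioo ⟨by linarith, h2⟩
  have hcne : Real.cos x ≠ 0 := ne_of_gt hcos
  have hxc : 0 < x * Real.cos x := mul_pos h1 hcos
  constructor
  · have hM := lowerM h1 h2
    have hid : 2 * (Real.sin x / x) + Real.tan x / x
        - (3 + (3 / 20 + (1 / 280) * x ^ 2 + (23 / 33600) * x ^ 4) * x ^ 3 * Real.tan x)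
        = (Real.sin (2*x) + Real.sin x - 3*(x*Real.cos x)
          - (3/20 + x^2/280 + 23/33600*x^4)*(x^4*Real.sin x))/(x*Real.cos x) := by
      rw [Real.sin_two_mul, Real.tan_eq_sin_div_cos]
      field_simp
      ring
    have hpos := div_pos hM hxc
    linarith [hid, hpos]
  · have hE : 0 < (17920 - 168*π^4 - π^6)/(70*π^8)*(x^8*Real.sin x)
        - (Real.sin (2*x) + Real.sin x - 3*(x*Real.cos x) - (3/20 + x^2/280)*(x^4*Real.sin x)) := by
      rcases le_or_gt x (143/100) with hc | hc
      · exact upperB1 h1 hc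
      · exact upperB2 hc.le h2
    have hid : 3 + (3 / 20 + (1 / 280) * x ^ 2 +
          ((17920 - 168 * π ^ 4 - π ^ 6) / (70 * π ^ 8)) * x ^ 4) * x ^ 3 * Real.tan x
        - (2 * (Real.sin x / x) + Real.tan x / x)
        = ((17920 - 168*π^4 - π^6)/(70*π^8)*(x^8*Real.sin x)
          - (Real.sin (2*x) + Real.sin x - 3*(x*Real.cos x)
            - (3/20 + x^2/280)*(x^4*Real.sin x)))/(x*Real.cos x) := by
      rw [Real.sin_two_mul, Real.tan_eq_sin_div_cos]
      field_simp
      ring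
    have hpos := div_pos hE hxc
    linarith [hid, hpos]
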